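/- Let w > -1 and β be real constants with β > 1/2 or β < 0, set α = 2β/(2β-1) > 0, and let c₅ > 0, c₆ > 0. Define for η ∈ ℝ the functions γ(η) = (c₅e^{3η} + 1/α)^{-1} and Ω(η) = [c₆(c₅αe^{3η}+1)^{-α}e^{3(α-w-1)η} + 1]^{-1}. Then: (i) γ'(η) = 3γ(η)·((2β-1)γ(η)/(2β) - 1) for all η; (ii) Ω'(η) = 3(w+1-γ(η))·Ω(η)·(1-Ω(η)) for all η; (iii) γ(η) → α = 2β/(2β-1) as η → -∞ and γ(η) → 0 as η → +∞; (iv) Ω(η) → 1 as η → +∞. Thus the purely kinetic k-essence fluid behaves like a barotropic fluid with equation-of-state parameter w_φ = α - 1 at early times and like a cosmological constant (w_φ → -1) dominating the universe at late times. -/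

import Mathlib

open Real Filter Topology

/-- Purely kinetic k-essence `P = A₁√X - A₂X^β`: the exact solution of the system
`Ω' = 3(w+1-γ)Ω(1-Ω)`, `γ' = 3γ((2β-1)γ/(2β)-1)` satisfies the equations, tends to
`γ → α = 2β/(2β-1)` (barotropic behaviour) at early times, and to `γ → 0`, `Ω → 1`
(cosmological-constant domination) at late times. -/
theorem purely_kinetic_k_essence_solution
    (w β c₅ c₆ α : ℝ) (hw : -1 < w) (hβ : 1 / 2 < β ∨ β < 0)
    (hc₅ : 0 < c₅) (hc₆ : 0 < c₆) (hα : α = 2 * β / (2 * β - 1))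
    (γ Ω : ℝ → ℝ)
    (hγ : ∀ η : ℝ, γ η = (c₅ * Real.exp (3 * η) + 1 / α)⁻¹)
    (hΩ : ∀ η : ℝ,
      Ω η = (c₆ * (c₅ * α * Real.exp (3 * η) + 1) ^ (-α)
        * Real.exp (3 * (α - w - 1) * η) + 1)⁻¹) :
    0 < α ∧
    (∀ η : ℝ, HasDerivAt γ (3 * γ η * ((2 * β - 1) * γ η / (2 * β) - 1)) η) ∧
    (∀ η : ℝ, HasDerivAt Ω (3 * (w + 1 - γ η) * Ω η * (1 - Ω η)) η) ∧
    Tendsto γ atBot (nhds α) ∧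
    Tendsto γ atTop (nhds 0) ∧
    Tendsto Ω atTop (nhds 1) := by
  have h2b1 : 2 * β - 1 ≠ 0 := by rcases hβ with h | h <;> intro hc <;> linarith
  have h2b : 2 * β ≠ 0 := by rcases hβ with h | h <;> intro hc <;> linarith
  have hα0 : 0 < α := by
    rw [hα]
    rcases hβ with h | h
    · exact div_pos (by linarith) (by linarith)
    · exact div_pos_of_neg_of_neg (by linarith) (by linarith)
  obtain rfl : γ = fun η => (c₅ * Real.exp (3 * η) + 1 / α)⁻¹ := funext hγ
  obtain rfl : Ω = fun η => (c₆ * (c₅ * α * Real.exp (3 * η) + 1) ^ (-α)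
      * Real.exp (3 * (α - w - 1) * η) + 1)⁻¹ := funext hΩ
  have hu0 : ∀ η : ℝ, 0 < c₅ * Real.exp (3 * η) + 1 / α := fun η =>
    add_pos (mul_pos hc₅ (exp_pos _)) (one_div_pos.mpr hα0)
  have hf0 : ∀ η : ℝ, 0 < c₅ * α * Real.exp (3 * η) + 1 := fun η =>
    add_pos (mul_pos (mul_pos hc₅ hα0) (exp_pos _)) one_pos
  have hA0 : ∀ η : ℝ, 0 < (c₅ * α * Real.exp (3 * η) + 1) ^ (-α) := fun η =>
    rpow_pos_of_pos (hf0 η) _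
  have hv0 : ∀ η : ℝ, 0 < c₆ * (c₅ * α * Real.exp (3 * η) + 1) ^ (-α)
      * Real.exp (3 * (α - w - 1) * η) + 1 := fun η =>
    add_pos (mul_pos (mul_pos hc₆ (hA0 η)) (exp_pos _)) one_pos
  refine ⟨hα0, ?_, ?_, ?_, ?_, ?_⟩
  · -- derivative of γ
    intro η
    have h3 : HasDerivAt (fun x : ℝ => 3 * x) 3 η := by
      simpa using (hasDerivAt_id η).const_mul 3
    have hd : HasDerivAt (fun x : ℝ => c₅ * Real.exp (3 * x) + 1 / α)
        (c₅ * (Real.exp (3 * η) * 3)) η := (h3.exp.const_mul c₅).add_const (1 / α)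
    have := hd.inv (hu0 η).ne'
    convert this using 1
    · rfl
    · rfl
    · rfl
    have hinv : 1 / α = (2 * β - 1) / (2 * β) := by rw [hα]; field_simp
    rw [show (2 * β - 1) * (c₅ * Real.exp (3 * η) + 1 / α)⁻¹ / (2 * β)
        = (1 / α) * (c₅ * Real.exp (3 * η) + 1 / α)⁻¹ from by rw [hinv]; ring]
    have hne := (hu0 η).ne'
    set q := 1 / α with hq
    field_simp
    ring
  · -- derivative of Ω
    intro η
    have h3 : HasDerivAt (fun x : ℝ => 3 * x) 3 η := by
      simpa using (hasDerivAt_id η).const_mul 3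
    have hdf : HasDerivAt (fun x : ℝ => c₅ * α * Real.exp (3 * x) + 1)
        (c₅ * α * (Real.exp (3 * η) * 3)) η := (h3.exp.const_mul (c₅ * α)).add_const 1
    have hdA : HasDerivAt (fun x : ℝ => (c₅ * α * Real.exp (3 * x) + 1) ^ (-α))
        (c₅ * α * (Real.exp (3 * η) * 3) * (-α)
          * (c₅ * α * Real.exp (3 * η) + 1) ^ (-α - 1)) η :=
      hdf.rpow_const (Or.inl (hf0 η).ne')
    have hg3 : HasDerivAt (fun x : ℝ => 3 * (α - w - 1) * x) (3 * (α - w - 1)) η := by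
      simpa using (hasDerivAt_id η).const_mul (3 * (α - w - 1))
    have hdg : HasDerivAt (fun x : ℝ => Real.exp (3 * (α - w - 1) * x))
        (Real.exp (3 * (α - w - 1) * η) * (3 * (α - w - 1))) η := hg3.exp
    have hdv : HasDerivAt (fun x : ℝ => c₆ * (c₅ * α * Real.exp (3 * x) + 1) ^ (-α)
        * Real.exp (3 * (α - w - 1) * x) + 1)
        (c₆ * (c₅ * α * (Real.exp (3 * η) * 3) * (-α)
            * (c₅ * α * Real.exp (3 * η) + 1) ^ (-α - 1))
            * Real.exp (3 * (α - w - 1) * η)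
          + c₆ * (c₅ * α * Real.exp (3 * η) + 1) ^ (-α)
            * (Real.exp (3 * (α - w - 1) * η) * (3 * (α - w - 1)))) η :=
      ((hdA.const_mul c₆).mul hdg).add_const 1
    have := hdv.inv (hv0 η).ne'
    convert this using 1
    · rfl
    · rfl
    · rfl
    have hA1 : (c₅ * α * Real.exp (3 * η) + 1) ^ (-α - 1)
        = (c₅ * α * Real.exp (3 * η) + 1) ^ (-α) * (c₅ * α * Real.exp (3 * η) + 1)⁻¹ := by
      rw [show -α - 1 = -α + (-1 : ℝ) by ring, Real.rpow_add (hf0 η), Real.rpow_neg_one]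
    rw [hA1]
    have h1 := (hu0 η).ne'
    have h2 := (hf0 η).ne'
    have h3' := (hv0 η).ne'
    have h4 := (hA0 η).ne'
    field_simp
    ring
  · -- γ → α at -∞
    have h1 : Tendsto (fun η : ℝ => 3 * η) atBot atBot :=
      tendsto_atBot_atBot.2 fun b => ⟨b / 3, fun a ha => by linarith⟩
    have h2 : Tendsto (fun η : ℝ => Real.exp (3 * η)) atBot (nhds 0) :=
      Real.tendsto_exp_atBot.comp h1
    have h3 : Tendsto (fun η : ℝ => c₅ * Real.exp (3 * η) + 1 / α) atBot (nhds (1 / α)) := by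
      simpa using (h2.const_mul c₅).add_const (1 / α)
    have h4 := h3.inv₀ (by positivity : (1 / α : ℝ) ≠ 0)
    simpa [one_div] using h4
  · -- γ → 0 at +∞
    have h1 : Tendsto (fun η : ℝ => 3 * η) atTop atTop :=
      tendsto_atTop_atTop.2 fun b => ⟨b / 3, fun a ha => by linarith⟩
    have h2 : Tendsto (fun η : ℝ => Real.exp (3 * η)) atTop atTop :=
      Real.tendsto_exp_atTop.comp h1
    have h3 : Tendsto (fun η : ℝ => c₅ * Real.exp (3 * η) + 1 / α) atTop atTop :=
      tendsto_atTop_add_const_right _ _ (h2.const_mul_atTop hc₅)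
    exact tendsto_inv_atTop_zero.comp h3
  · -- Ω → 1 at +∞
    set t : ℝ → ℝ := fun η => c₆ * (c₅ * α * Real.exp (3 * η) + 1) ^ (-α)
      * Real.exp (3 * (α - w - 1) * η) with ht
    have hbound : ∀ η : ℝ, t η ≤ c₆ * (c₅ * α) ^ (-α) * Real.exp (-(3 * (w + 1)) * η) := by
      intro η
      have hle : (c₅ * α * Real.exp (3 * η) + 1) ^ (-α)
          ≤ (c₅ * α * Real.exp (3 * η)) ^ (-α) :=
        Real.rpow_le_rpow_of_nonpos (by positivity) (by linarith) (by linarith)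
      have heq : (c₅ * α * Real.exp (3 * η)) ^ (-α)
          = (c₅ * α) ^ (-α) * Real.exp (3 * η * (-α)) := by
        rw [Real.mul_rpow (by positivity) (le_of_lt (exp_pos _)), ← Real.exp_mul]
      calc t η = c₆ * (c₅ * α * Real.exp (3 * η) + 1) ^ (-α)
              * Real.exp (3 * (α - w - 1) * η) := rfl
        _ ≤ c₆ * (c₅ * α * Real.exp (3 * η)) ^ (-α) * Real.exp (3 * (α - w - 1) * η) :=
            mul_le_mul_of_nonneg_right (mul_le_mul_of_nonneg_left hle hc₆.le)
              (exp_pos _).le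
        _ = c₆ * (c₅ * α) ^ (-α) * (Real.exp (3 * η * (-α))
              * Real.exp (3 * (α - w - 1) * η)) := by rw [heq]; ring
        _ = c₆ * (c₅ * α) ^ (-α) * Real.exp (-(3 * (w + 1)) * η) := by
            rw [← Real.exp_add, show 3 * η * (-α) + 3 * (α - w - 1) * η
              = -(3 * (w + 1)) * η by ring]
    have hlim : Tendsto (fun η : ℝ => c₆ * (c₅ * α) ^ (-α) * Real.exp (-(3 * (w + 1)) * η))
        atTop (nhds 0) := by
      have h1 : Tendsto (fun η : ℝ => -(3 * (w + 1)) * η) atTop atBot := by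
        apply tendsto_atTop_atBot.2
        intro b
        refine ⟨b / (-(3 * (w + 1))), fun a ha => ?_⟩
        have hneg : -(3 * (w + 1)) < 0 := by linarith
        calc -(3 * (w + 1)) * a ≤ -(3 * (w + 1)) * (b / (-(3 * (w + 1)))) := by
              apply mul_le_mul_of_nonpos_left ha hneg.le
          _ = b := by rw [← mul_div_assoc]; exact mul_div_cancel_left₀ b (ne_of_lt hneg)
      have h2 : Tendsto (fun η : ℝ => Real.exp (-(3 * (w + 1)) * η)) atTop (nhds 0) :=
        Real.tendsto_exp_atBot.comp h1
      simpa using h2.const_mul (c₆ * (c₅ * α) ^ (-α))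
    have ht0 : Tendsto t atTop (nhds 0) :=
      squeeze_zero (fun η => by rw [ht]; positivity) hbound hlim
    have := ((ht0.add_const 1).inv₀ (by norm_num)).congr (fun η => rfl)
    simpa using this
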